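/- Let A be a finitely-ambiguous NFA, S ⊆ Δ a support, and let w = x·y·z ∈ L(A_S) with y ∈ Σ+ have exactly M accepting runs in A_S. Suppose there exist sets Q', R ⊆ Q such that: (1) Q' = {q ∈ δ_{A_S}(q0, x) : the word yz has an accepting run from q in A_S}, and every accepting run of w in A_S that is in a state q ∈ Q' after reading x is in the same state q again after reading xy; (2) R = {q ∈ δ_{A_S}(q0, x) : yz has no accepting run from q in A_S} and also R = {q ∈ δ_{A_S}(q0, xy) : z has no accepting run from q in A_S}. Then for every j ∈ ℕ, the word x·y^j·z has exactly M accepting runs in A_S. -/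

import Mathlib

open scoped BigOperators

/-- A nondeterministic finite automaton over alphabet `σ` with states `Q`:
an initial state, a finite set of transitions and a finite set of accepting states. -/
structure NFA' (σ Q : Type) where
  init : Q
  trans : Finset (Q × σ × Q)
  accept : Finset Q

namespace NFA'

variable {σ Q : Type}

/-- `IsRun Δ p w ts r`: `ts` is a run on the word `w` from state `p` to state `r`,
using transitions from `Δ`. -/
inductive IsRun (Δ : Finset (Q × σ × Q)) : Q → List σ → List (Q × σ × Q) → Q → Prop
  | nil (q : Q) : IsRun Δ q [] [] q
  | cons {p : Q} {a : σ} {q r : Q} {w : List σ} {ts : List (Q × σ × Q)} :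
      (p, a, q) ∈ Δ → IsRun Δ q w ts r → IsRun Δ p (a :: w) ((p, a, q) :: ts) r

/-- `ts` is an accepting run of `A` on `w`. -/
def AccRun (A : NFA' σ Q) (w : List σ) (ts : List (Q × σ × Q)) : Prop :=
  ∃ r ∈ A.accept, IsRun A.trans A.init w ts r

/-- The language of `A`: words admitting an accepting run. -/
def lang (A : NFA' σ Q) : Set (List σ) := {w | ∃ ts, A.AccRun w ts}

/-- `δ(q, u)`: the set of states reachable from `q` by a run on `u`. -/
def reach (A : NFA' σ Q) (q : Q) (u : List σ) : Set Q :=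
  {r | ∃ ts, IsRun A.trans q u ts r}

/-- The word `u` admits an accepting run from the state `q`. -/
def AccFrom (A : NFA' σ Q) (q : Q) (u : List σ) : Prop :=
  ∃ r ∈ A.accept, ∃ ts, IsRun A.trans q u ts r

/-- `A_S`: the automaton `A` with transitions restricted to `S`. -/
def restrict (A : NFA' σ Q) (S : Finset (Q × σ × Q)) : NFA' σ Q :=
  { A with trans := S }

/-- `A` is `k`-ambiguous: every word has at most `k` accepting runs. -/
def kAmbiguous (A : NFA' σ Q) (k : ℕ) : Prop :=
  ∀ w, {ts | A.AccRun w ts}.encard ≤ (k : ℕ∞)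

/-- `A` is finitely-ambiguous. -/
def FinitelyAmbiguous (A : NFA' σ Q) : Prop := ∃ k : ℕ, 0 < k ∧ A.kAmbiguous k

/-- A memoryless stochastic resolver for `A`: probabilities, supported on the transitions
of `A`, summing to one over the outgoing transitions of every pair `(p, a)` that has at
least one outgoing transition (implicitly, `A` is completed with a non-accepting sink). -/
structure Resolver (A : NFA' σ Q) where
  r : Q × σ × Q → ℝ
  nonneg : ∀ t, 0 ≤ r t
  le_one : ∀ t, r t ≤ 1
  supp : ∀ t, r t ≠ 0 → t ∈ A.trans
  sum_one : ∀ p a, (∃ q, (p, a, q) ∈ A.trans) →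
      ∑ t ∈ A.trans, {t : Q × σ × Q | t.1 = p ∧ t.2.1 = a}.indicator r t = 1

/-- The probability of a run: the product of the probabilities of its transitions. -/
def runProb (f : Q × σ × Q → ℝ) (ts : List (Q × σ × Q)) : ℝ := (ts.map f).prod

/-- The acceptance probability of a word: the sum, over all accepting runs, of the
product of the transition probabilities along the run. -/
noncomputable def accProb (A : NFA' σ Q) (f : Q × σ × Q → ℝ) (w : List σ) : ℝ :=
  ∑ᶠ ts ∈ {ts | A.AccRun w ts}, runProb f ts

/-- `A` is `λ`-memoryless-stochastically-resolvable. -/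
def Resolvable (A : NFA' σ Q) (lam : ℝ) : Prop :=
  ∃ R : A.Resolver, {w | lam ≤ A.accProb R.r w} = A.lang

/-- `A` is positively (memoryless stochastically) resolvable. -/
def PositivelyResolvable (A : NFA' σ Q) : Prop :=
  ∃ lam : ℝ, 0 < lam ∧ A.Resolvable lam

/-- The support `S` is bad: no resolver whose support is exactly `S` witnesses
positive resolvability. -/
def BadSupport (A : NFA' σ Q) (S : Finset (Q × σ × Q)) : Prop :=
  ∀ R : A.Resolver, (∀ t, R.r t ≠ 0 ↔ t ∈ S) →
    ∀ lam : ℝ, 0 < lam → {w | lam ≤ A.accProb R.r w} ≠ A.lang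

/-- A transition is nondeterministic in `S`. -/
def NondetIn (S : Finset (Q × σ × Q)) (t : Q × σ × Q) : Prop :=
  t ∈ S ∧ ∃ q', q' ≠ t.2.2 ∧ (t.1, t.2.1, q') ∈ S

/-- The number of transitions of a run that are nondeterministic in `S`. -/
noncomputable def nondetCount (S : Finset (Q × σ × Q)) (ts : List (Q × σ × Q)) : ℕ :=
  (ts.map (Set.indicator {t | NondetIn S t} (fun _ => 1))).sum

/-- `b(w)`: the minimal number of `S`-nondeterministic transitions over all accepting
runs of `w` in `A_S`. -/
noncomputable def minNondet (A : NFA' σ Q) (S : Finset (Q × σ × Q)) (w : List σ) : ℕ :=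
  sInf {m | ∃ ts, (A.restrict S).AccRun w ts ∧ nondetCount S ts = m}

/-- The state of a run `ts` (started in `q0`) after `n` transitions. -/
def stateAt (q0 : Q) (ts : List (Q × σ × Q)) (n : ℕ) : Q :=
  match (ts.take n).getLast? with
  | some t => t.2.2
  | none => q0

/-- `Θ` makes `A` into a probabilistic finite automaton (PFA) based on `A`. -/
def IsPFA (A : NFA' σ Q) (Θ : Q × σ × Q → ℝ) : Prop :=
  (∀ t ∈ A.trans, 0 < Θ t ∧ Θ t ≤ 1) ∧ (∀ t, t ∉ A.trans → Θ t = 0) ∧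
  ∀ p a, (∃ q, (p, a, q) ∈ A.trans) →
    ∑ t ∈ A.trans, {t : Q × σ × Q | t.1 = p ∧ t.2.1 = a}.indicator Θ t = 1

/-- The PFA is simple: every transition has probability `1/2` or `1`. -/
def IsSimple (A : NFA' σ Q) (Θ : Q × σ × Q → ℝ) : Prop :=
  ∀ t ∈ A.trans, Θ t = 1/2 ∨ Θ t = 1

end NFA'

namespace NFA'

variable {σ Q : Type}

theorem IsRun.length_eq {Δ : Finset (Q × σ × Q)} {p r : Q} {w : List σ}
    {ts : List (Q × σ × Q)} (h : IsRun Δ p w ts r) : ts.length = w.length := by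
  induction h with
  | nil => rfl
  | cons _ _ ih => simp [ih]

theorem IsRun.mono {Δ Δ' : Finset (Q × σ × Q)} {p r : Q} {w : List σ}
    {ts : List (Q × σ × Q)} (hΔ : Δ ⊆ Δ') (h : IsRun Δ p w ts r) : IsRun Δ' p w ts r := by
  induction h with
  | nil => exact .nil _
  | cons ht _ ih => exact .cons (hΔ ht) ih

theorem IsRun.append {Δ : Finset (Q × σ × Q)} {p q r : Q} {u v : List σ}
    {ts1 ts2 : List (Q × σ × Q)} (h1 : IsRun Δ p u ts1 q) (h2 : IsRun Δ q v ts2 r) :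
    IsRun Δ p (u ++ v) (ts1 ++ ts2) r := by
  induction h1 with
  | nil => simpa
  | cons ht _ ih => exact .cons ht (ih h2)

theorem IsRun.split {Δ : Finset (Q × σ × Q)} {p r : Q} {u v : List σ}
    {ts : List (Q × σ × Q)} (h : IsRun Δ p (u ++ v) ts r) :
    ∃ ts1 ts2 q, ts = ts1 ++ ts2 ∧ IsRun Δ p u ts1 q ∧ IsRun Δ q v ts2 r := by
  induction u generalizing p ts with
  | nil => exact ⟨[], ts, p, rfl, .nil p, h⟩
  | cons a u ih =>
    cases h with
    | cons ht h' =>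
      obtain ⟨ts1, ts2, q', rfl, h1, h2⟩ := ih h'
      exact ⟨_ :: ts1, ts2, q', rfl, .cons ht h1, h2⟩

theorem IsRun.nil_inv₁ {Δ : Finset (Q × σ × Q)} {p r : Q} {ts : List (Q × σ × Q)}
    (h : IsRun Δ p [] ts r) : ts = [] ∧ r = p := by cases h; exact ⟨rfl, rfl⟩

theorem IsRun.nil_inv₂ {Δ : Finset (Q × σ × Q)} {p r : Q} {w : List σ}
    (h : IsRun Δ p w [] r) : w = [] ∧ r = p := by cases h; exact ⟨rfl, rfl⟩

theorem IsRun.lastState {Δ : Finset (Q × σ × Q)} {p r : Q} {w : List σ}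
    {ts : List (Q × σ × Q)} (h : IsRun Δ p w ts r) (q0 : Q) (hne : ts ≠ []) :
    (match ts.getLast? with | some t => t.2.2 | none => q0) = r := by
  induction h with
  | nil => exact absurd rfl hne
  | @cons p a q r w ts ht h ih =>
    cases h with
    | nil => simp
    | cons ht' h' => rw [List.getLast?_cons_cons]; exact ih (by simp)

theorem IsRun.end_unique {Δ : Finset (Q × σ × Q)} {p r r' : Q} {w w' : List σ}
    {ts : List (Q × σ × Q)} (h : IsRun Δ p w ts r) (h' : IsRun Δ p w' ts r') : r = r' := by
  rcases eq_or_ne ts [] with rfl | hne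
  · rw [h.nil_inv₂.2, h'.nil_inv₂.2]
  · rw [← h.lastState p hne, ← h'.lastState p hne]

theorem stateAt_append {Δ : Finset (Q × σ × Q)} {q0 q : Q} {u : List σ}
    {ts1 : List (Q × σ × Q)} (h : IsRun Δ q0 u ts1 q) (ts2 : List (Q × σ × Q)) :
    stateAt q0 (ts1 ++ ts2) u.length = q := by
  unfold stateAt
  rw [List.take_left' h.length_eq]
  rcases eq_or_ne ts1 [] with rfl | hne
  · exact h.nil_inv₂.2.symm
  · exact h.lastState q0 hne

/-- A concatenation of loops on `y` is a run on a power of `y`. -/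
theorem loops_flatten {Δ : Finset (Q × σ × Q)} {q : Q} {y : List σ}
    (L : List (List (Q × σ × Q))) (hL : ∀ l ∈ L, IsRun Δ q y l q) :
    IsRun Δ q (List.replicate L.length y).flatten L.flatten q := by
  induction L with
  | nil => exact .nil q
  | cons l L ih =>
    simp only [List.length_cons, List.replicate_succ, List.flatten_cons]
    exact (hL l (by simp)).append (ih fun l' hl' => hL l' (by simp [hl']))

theorem flatten_inj_of_length {α : Type*} {L : ℕ} :
    ∀ (l1 l2 : List (List α)), (∀ s ∈ l1, s.length = L) → (∀ s ∈ l2, s.length = L) →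
      l1.length = l2.length → l1.flatten = l2.flatten → l1 = l2 := by
  intro l1
  induction l1 with
  | nil => intro l2 _ _ hlen _; cases l2 <;> simp_all
  | cons s l1 ih =>
    intro l2 h1 h2 hlen hf
    cases l2 with
    | nil => simp at hlen
    | cons s' l2 =>
      simp only [List.flatten_cons] at hf
      have hlen' : s.length = s'.length := by
        rw [h1 s (by simp), h2 s' (by simp)]
      obtain ⟨rfl, hf'⟩ := List.append_inj hf hlen'
      have := ih l2 (fun t ht => h1 t (by simp [ht])) (fun t ht => h2 t (by simp [ht]))
        (by simpa using hlen) hf'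
      rw [this]

end NFA'

open NFA'

set_option maxHeartbeats 1000000 in
/-- Pumping the loop word `y` preserves the number of accepting runs. -/
theorem stmt14 {σ Q : Type} (A : NFA' σ Q) (hfa : A.FinitelyAmbiguous)
    (S : Finset (Q × σ × Q)) (hS : S ⊆ A.trans)
    (x y z : List σ) (hy : y ≠ []) (M : ℕ)
    (hw : x ++ y ++ z ∈ (A.restrict S).lang)
    (hM : {ts | (A.restrict S).AccRun (x ++ y ++ z) ts}.encard = (M : ℕ∞))
    (Q' R : Set Q)
    -- (1)
    (hQ' : Q' = {q | q ∈ (A.restrict S).reach A.init x ∧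
      (A.restrict S).AccFrom q (y ++ z)})
    (hloop : ∀ ts, (A.restrict S).AccRun (x ++ y ++ z) ts →
      stateAt A.init ts x.length ∈ Q' →
      stateAt A.init ts (x.length + y.length) = stateAt A.init ts x.length)
    -- (2)
    (hR1 : R = {q | q ∈ (A.restrict S).reach A.init x ∧
      ¬ (A.restrict S).AccFrom q (y ++ z)})
    (hR2 : R = {q | q ∈ (A.restrict S).reach A.init (x ++ y) ∧
      ¬ (A.restrict S).AccFrom q z}) :
    ∀ j : ℕ,
      {ts | (A.restrict S).AccRun (x ++ (List.replicate j y).flatten ++ z) ts}.encard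
        = (M : ℕ∞) := by
  classical
  intro j
  -- E: reachable by x and accepting y^m z implies accepting y z
  have hE : ∀ (m : ℕ) (q : Q), (∃ tx, IsRun S A.init x tx q) →
      (A.restrict S).AccFrom q ((List.replicate m y).flatten ++ z) →
      (A.restrict S).AccFrom q (y ++ z) := by
    intro m
    induction m with
    | zero =>
      intro q hqx hqz
      by_contra hne
      have hqR : q ∈ R := by rw [hR1]; exact ⟨hqx, hne⟩
      rw [hR2] at hqR
      simp only [List.replicate_zero, List.flatten_nil, List.nil_append] at hqz
      exact hqR.2 hqz
    | succ m ih =>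
      intro q hqx hqz
      obtain ⟨r, hr, ts, hts⟩ := hqz
      rw [show (List.replicate (m+1) y).flatten ++ z
          = y ++ ((List.replicate m y).flatten ++ z) by
        simp [List.replicate_succ]] at hts
      obtain ⟨t1, t2, q2, rfl, h1, h2⟩ := hts.split
      by_cases hq2z : (A.restrict S).AccFrom q2 z
      · obtain ⟨r', hr', tz, htz⟩ := hq2z
        exact ⟨r', hr', t1 ++ tz, h1.append htz⟩
      · have hq2R : q2 ∈ R := by
          rw [hR2]
          obtain ⟨tx, htx⟩ := hqx
          exact ⟨⟨tx ++ t1, htx.append h1⟩, hq2z⟩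
        rw [hR1] at hq2R
        exact absurd (ih q2 hq2R.1 ⟨r, hr, t2, h2⟩) hq2R.2
  -- B: y-runs from a good state that can still accept z must loop
  have hB : ∀ (q q' : Q) (tx ty : List (Q × σ × Q)),
      IsRun S A.init x tx q → (A.restrict S).AccFrom q (y ++ z) →
      IsRun S q y ty q' → (A.restrict S).AccFrom q' z → q' = q := by
    intro q q' tx ty htx hq hty hq'z
    obtain ⟨r, hr, tz, htz⟩ := hq'z
    have hrun : (A.restrict S).AccRun (x ++ y ++ z) (tx ++ ty ++ tz) :=
      ⟨r, hr, (htx.append hty).append htz⟩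
    have e2 : stateAt A.init (tx ++ ty ++ tz) x.length = q := by
      have h := stateAt_append htx (ty ++ tz)
      simpa [List.append_assoc] using h
    have hmem : stateAt A.init (tx ++ ty ++ tz) x.length ∈ Q' := by
      rw [e2, hQ']
      exact ⟨⟨tx, htx⟩, hq⟩
    have e1 : stateAt A.init (tx ++ ty ++ tz) (x.length + y.length) = q' := by
      have h := stateAt_append (htx.append hty) tz
      simpa [List.length_append] using h
    have hl := hloop _ hrun hmem
    rw [e1, e2] at hl
    exact hl
  -- F
  have hF : ∀ (m : ℕ) (q q' : Q) (tx ty : List (Q × σ × Q)),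
      IsRun S A.init x tx q → (A.restrict S).AccFrom q (y ++ z) →
      IsRun S q y ty q' → (A.restrict S).AccFrom q' ((List.replicate m y).flatten ++ z) →
      q' = q ∧ (A.restrict S).AccFrom q' z := by
    intro m q q' tx ty htx hq hty hq'
    have hq'z : (A.restrict S).AccFrom q' z := by
      by_contra hno
      have hmem : q' ∈ R := by
        rw [hR2]
        exact ⟨⟨tx ++ ty, htx.append hty⟩, hno⟩
      rw [hR1] at hmem
      exact hmem.2 (hE m q' hmem.1 hq')
    exact ⟨hB q q' tx ty htx hq hty hq'z, hq'z⟩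
  -- uniqueness of loops, via finite ambiguity
  have hU : ∀ (q : Q) (tx tz : List (Q × σ × Q)) (r : Q) (ty ty' : List (Q × σ × Q)),
      IsRun S A.init x tx q → r ∈ A.accept → IsRun S q z tz r →
      IsRun S q y ty q → IsRun S q y ty' q → ty = ty' := by
    intro q tx tz r ty ty' htx hr htz hty hty'
    by_contra hne
    obtain ⟨k, hk, hamb⟩ := hfa
    set wk : List σ := x ++ (List.replicate k y).flatten ++ z with hwk
    have hylen : ∀ (b : Bool), (if b then ty else ty').length = y.length := by
      intro b; cases b <;> simp [hty.length_eq, hty'.length_eq]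
    set g : (Fin k → Bool) → List (Q × σ × Q) :=
      fun f => tx ++ (List.ofFn fun i => if f i then ty else ty').flatten ++ tz with hg
    have hgmem : ∀ f, A.AccRun wk (g f) := by
      intro f
      refine ⟨r, hr, ?_⟩
      have hloop' : IsRun S q (List.replicate k y).flatten
          (List.ofFn fun i => if f i then ty else ty').flatten q := by
        have h := loops_flatten (Δ := S) (q := q) (y := y)
          (List.ofFn fun i => if f i then ty else ty')
          (by intro l hl
              simp only [List.mem_ofFn, Set.mem_range] at hl
              obtain ⟨i, rfl⟩ := hl
              cases f i <;> simpa)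
        simpa using h
      exact ((htx.append hloop').append htz).mono hS
    have hginj : Function.Injective g := by
      intro f f' hff
      simp only [hg] at hff
      have h2 := List.append_cancel_right hff
      have h3 := List.append_cancel_left h2
      have h4 := flatten_inj_of_length (L := y.length)
        (List.ofFn fun i => if f i then ty else ty')
        (List.ofFn fun i => if f' i then ty else ty')
        (by intro s hs
            simp only [List.mem_ofFn, Set.mem_range] at hs
            obtain ⟨i, rfl⟩ := hs; exact hylen _)
        (by intro s hs
            simp only [List.mem_ofFn, Set.mem_range] at hs
            obtain ⟨i, rfl⟩ := hs; exact hylen _)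
        (by simp) h3
      rw [List.ofFn_inj] at h4
      funext i
      have hi := congrFun h4 i
      cases hfi : f i <;> cases hfi' : f' i
      · rfl
      · rw [hfi, hfi'] at hi
        simp only [Bool.false_eq_true, if_false, if_true] at hi
        exact absurd hi.symm hne
      · rw [hfi, hfi'] at hi
        simp only [Bool.false_eq_true, if_false, if_true] at hi
        exact absurd hi hne
      · rfl
    have hsub : g '' Set.univ ⊆ {ts | A.AccRun wk ts} := by
      rintro _ ⟨f, -, rfl⟩; exact hgmem f
    have hcard : (g '' Set.univ).encard = ((2 ^ k : ℕ) : ℕ∞) := by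
      rw [Set.InjOn.encard_image (hginj.injOn), Set.encard_univ,
        ENat.card_eq_coe_fintype_card]
      simp [Fintype.card_fun]
    have hle : ((2 ^ k : ℕ) : ℕ∞) ≤ (k : ℕ∞) := by
      rw [← hcard]
      exact le_trans (Set.encard_le_encard hsub) (hamb wk)
    have h2k : (2 : ℕ) ^ k ≤ k := by exact_mod_cast hle
    exact absurd h2k (Nat.not_le.mpr (Nat.lt_two_pow_self (n := k)))
  -- existence of loops
  have hEx : ∀ (q : Q) (tx : List (Q × σ × Q)), IsRun S A.init x tx q →
      (A.restrict S).AccFrom q (y ++ z) →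
      ∃ ty tz r, IsRun S q y ty q ∧ r ∈ A.accept ∧ IsRun S q z tz r := by
    intro q tx htx hq
    obtain ⟨r, hr, ts, hts⟩ := hq
    obtain ⟨ty, tz, q2, rfl, h1, h2⟩ := hts.split
    have hq2 : q2 = q := hB q q2 tx ty htx ⟨r, hr, _, h1.append h2⟩ h1 ⟨r, hr, tz, h2⟩
    rw [hq2] at h1 h2
    exact ⟨ty, tz, r, h1, hr, h2⟩
  -- G : runs on y^m from a good state are iterated canonical loops
  have hG : ∀ (m : ℕ) (q : Q) (tx tyq : List (Q × σ × Q)),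
      IsRun S A.init x tx q → (A.restrict S).AccFrom q (y ++ z) → IsRun S q y tyq q →
      ∀ (T : List (Q × σ × Q)) (qe : Q),
        IsRun S q (List.replicate m y).flatten T qe → (A.restrict S).AccFrom qe z →
        qe = q ∧ T = (List.replicate m tyq).flatten := by
    intro m
    induction m with
    | zero =>
      intro q tx tyq htx hq htyq T qe hT hqe
      simp only [List.replicate_zero, List.flatten_nil] at hT ⊢
      obtain ⟨rfl, rfl⟩ := hT.nil_inv₁
      exact ⟨rfl, rfl⟩
    | succ m ih =>
      intro q tx tyq htx hq htyq T qe hT hqe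
      rw [show (List.replicate (m+1) y).flatten = y ++ (List.replicate m y).flatten by
        simp [List.replicate_succ]] at hT
      obtain ⟨t1, T2, q2, rfl, h1, h2⟩ := hT.split
      obtain ⟨r, hr, tz, htz⟩ := hqe
      obtain ⟨hq2q, hq2z⟩ :=
        hF m q q2 tx t1 htx hq h1 ⟨r, hr, T2 ++ tz, h2.append htz⟩
      rw [hq2q] at h1 h2 hq2z
      obtain ⟨r2, hr2, tz2, htz2⟩ := hq2z
      have ht1 : t1 = tyq := hU q tx tz2 r2 t1 tyq htx hr2 htz2 h1 htyq
      obtain ⟨hqe, hT2⟩ := ih q tx tyq htx hq htyq T2 qe h2 ⟨r, hr, tz, htz⟩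
      refine ⟨hqe, ?_⟩
      rw [ht1, hT2]
      simp [List.replicate_succ]
  -- decomposition of accepting runs of x ++ y ++ z
  have hdec : ∀ ts, (A.restrict S).AccRun (x ++ y ++ z) ts →
      ∃ tx ty tz q r, ts = tx ++ (ty ++ tz) ∧ IsRun S A.init x tx q ∧
        IsRun S q y ty q ∧ r ∈ A.accept ∧ IsRun S q z tz r := by
    intro ts hts
    obtain ⟨r, hr, h⟩ := hts
    rw [List.append_assoc] at h
    obtain ⟨tx, rest, q, rfl, htx, hrest⟩ := h.split
    obtain ⟨ty, tz, q2, rfl, hty, htz⟩ := hrest.split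
    have hq : (A.restrict S).AccFrom q (y ++ z) := ⟨r, hr, _, hty.append htz⟩
    have hq2 : q2 = q := hB q q2 tx ty htx hq hty ⟨r, hr, tz, htz⟩
    rw [hq2] at hty htz
    exact ⟨tx, ty, tz, q, r, rfl, htx, hty, hr, htz⟩
  -- the pumping map
  set Φ : List (Q × σ × Q) → List (Q × σ × Q) := fun ts =>
    ts.take x.length ++ (List.replicate j ((ts.drop x.length).take y.length)).flatten ++
      ts.drop (x.length + y.length) with hΦ
  have hΦcomp : ∀ (tx ty tz : List (Q × σ × Q)), tx.length = x.length →
      ty.length = y.length →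
      Φ (tx ++ (ty ++ tz)) = tx ++ (List.replicate j ty).flatten ++ tz := by
    intro tx ty tz h1 h2
    simp only [hΦ]
    rw [List.take_left' h1, List.drop_left' h1, List.take_left' h2,
      show tx ++ (ty ++ tz) = (tx ++ ty) ++ tz from (List.append_assoc _ _ _).symm,
      List.drop_left' (by simp [h1, h2])]
  have hrep : ∀ (q : Q) (ty : List (Q × σ × Q)), IsRun S q y ty q →
      IsRun S q (List.replicate j y).flatten (List.replicate j ty).flatten q := by
    intro q ty hty
    have h := loops_flatten (Δ := S) (q := q) (y := y) (List.replicate j ty)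
      (by intro l hl; rw [List.eq_of_mem_replicate hl]; exact hty)
    simpa using h
  have hmaps : ∀ ts ∈ {ts | (A.restrict S).AccRun (x ++ y ++ z) ts},
      Φ ts ∈ {ts | (A.restrict S).AccRun (x ++ (List.replicate j y).flatten ++ z) ts} := by
    intro ts hts
    obtain ⟨tx, ty, tz, q, r, rfl, htx, hty, hr, htz⟩ := hdec ts hts
    rw [Set.mem_setOf_eq, hΦcomp tx ty tz htx.length_eq hty.length_eq]
    exact ⟨r, hr, (htx.append (hrep q ty hty)).append htz⟩
  have hinj : Set.InjOn Φ {ts | (A.restrict S).AccRun (x ++ y ++ z) ts} := by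
    intro ts1 h1 ts2 h2 heq
    obtain ⟨tx, ty, tz, q, r, rfl, htx, hty, hr, htz⟩ := hdec ts1 h1
    obtain ⟨tx', ty', tz', q', r', rfl, htx', hty', hr', htz'⟩ := hdec ts2 h2
    rw [hΦcomp tx ty tz htx.length_eq hty.length_eq,
      hΦcomp tx' ty' tz' htx'.length_eq hty'.length_eq] at heq
    rw [List.append_assoc, List.append_assoc] at heq
    have etx : tx = tx' := by
      have h := congrArg (List.take x.length) heq
      rwa [List.take_left' htx.length_eq, List.take_left' htx'.length_eq] at h
    subst etx
    have eq' : q = q' := htx.end_unique htx'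
    subst eq'
    have ety : ty = ty' := hU q tx tz r ty ty' htx hr htz hty hty'
    subst ety
    have h5 := List.append_cancel_left heq
    have h6 := List.append_cancel_left h5
    rw [h6]
  have hsurj : ∀ ts' ∈ {ts | (A.restrict S).AccRun
        (x ++ (List.replicate j y).flatten ++ z) ts},
      ∃ ts ∈ {ts | (A.restrict S).AccRun (x ++ y ++ z) ts}, Φ ts = ts' := by
    intro ts' hts'
    obtain ⟨r, hr, h⟩ := hts'
    rw [List.append_assoc] at h
    obtain ⟨tx, rest, q1, rfl, htx, hrest⟩ := h.split
    obtain ⟨T, tz, qe, rfl, hT, htz⟩ := hrest.split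
    have hq1 : (A.restrict S).AccFrom q1 (y ++ z) :=
      hE j q1 ⟨tx, htx⟩ ⟨r, hr, _, hT.append htz⟩
    obtain ⟨ty0, tz0, r0, hty0, hr0, htz0⟩ := hEx q1 tx htx hq1
    obtain ⟨hqe, hTeq⟩ := hG j q1 tx ty0 htx hq1 hty0 T qe hT ⟨r, hr, tz, htz⟩
    rw [hqe] at htz
    refine ⟨tx ++ (ty0 ++ tz), ?_, ?_⟩
    · have hrun := (htx.append hty0).append htz
      exact ⟨r, hr, by simpa [List.append_assoc] using hrun⟩
    · rw [hΦcomp tx ty0 tz htx.length_eq hty0.length_eq, hTeq, List.append_assoc]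
  have himg : Φ '' {ts | (A.restrict S).AccRun (x ++ y ++ z) ts}
      = {ts | (A.restrict S).AccRun (x ++ (List.replicate j y).flatten ++ z) ts} := by
    apply Set.Subset.antisymm
    · rintro _ ⟨ts, hts, rfl⟩; exact hmaps ts hts
    · intro ts' hts'
      obtain ⟨ts, hts, hΦts⟩ := hsurj ts' hts'
      exact ⟨ts, hts, hΦts⟩
  calc {ts | (A.restrict S).AccRun (x ++ (List.replicate j y).flatten ++ z) ts}.encard
      = (Φ '' {ts | (A.restrict S).AccRun (x ++ y ++ z) ts}).encard := by rw [himg]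
    _ = {ts | (A.restrict S).AccRun (x ++ y ++ z) ts}.encard := hinj.encard_image
    _ = (M : ℕ∞) := hM
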